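/- Let j, k, n be positive integers and let (c_1 ≤ ... ≤ c_{kj+1}) and (c'_1 ≤ ... ≤ c'_{kj+1}) be two sequences of positive integers each summing to n − j. Let π = (c_1+j−1)^{c_1} ... (c_{kj+1}+j−1)^{c_{kj+1}} (n−1)^j and π' defined analogously from the c'_i. If π majorizes π' componentwise (both written in nondecreasing order), then the two sequences (c_i) and (c'_i) are equal. -/

import Mathlib

/-- The degree multiset `(c_1+j-1)^{c_1} … (c_s+j-1)^{c_s} (n-1)^j` of the graph
`K_j + (K_{c_1} ∪ … ∪ K_{c_s})` on `n` vertices. -/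
def degSeqMS (n j : ℕ) {s : ℕ} (c : Fin s → ℕ) : Multiset ℕ :=
  (∑ i : Fin s, Multiset.replicate (c i) (c i + j - 1)) + Multiset.replicate j (n - 1)

/-- The `i`-th entry (0-based) of the multiset `M` sorted nondecreasingly. -/
def sortedNth (M : Multiset ℕ) (i : ℕ) : ℕ :=
  (Multiset.sort M (· ≤ ·)).getD i 0

theorem stmt9 (j k n : ℕ) (hj : 1 ≤ j) (hk : 1 ≤ k) (hn : 1 ≤ n)
    (c c' : Fin (k * j + 1) → ℕ)
    (hc : ∀ i, 1 ≤ c i) (hc' : ∀ i, 1 ≤ c' i)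
    (hmc : Monotone c) (hmc' : Monotone c')
    (hsum : (∑ i, c i) = n - j) (hsum' : (∑ i, c' i) = n - j)
    -- π majorizes π' componentwise (both sorted nondecreasingly)
    (hmaj : ∀ i : ℕ, sortedNth (degSeqMS n j c') i ≤ sortedNth (degSeqMS n j c) i) :
    c = c' := by
  classical
  have hkj : 1 ≤ k * j := Nat.one_le_iff_ne_zero.mpr (by positivity)
  -- basic size facts
  have hlb : k * j + 1 ≤ ∑ i, c i := by
    calc k * j + 1 = ∑ _i : Fin (k * j + 1), 1 := by simp
    _ ≤ ∑ i, c i := Finset.sum_le_sum fun i _ => hc i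
  have hS2 : 2 ≤ n - j := by omega
  have hn2 : j + 2 ≤ n := by omega
  -- cardinality of the degree multiset
  have hcard : ∀ (d : Fin (k * j + 1) → ℕ), (∑ i, d i) = n - j →
      Multiset.card (degSeqMS n j d) = n := by
    intro d hsd
    simp only [degSeqMS, Multiset.card_add, Multiset.card_sum, Multiset.card_replicate]
    rw [hsd]; omega
  -- all entries are at least j
  have hmem : ∀ (d : Fin (k * j + 1) → ℕ), (∀ i, 1 ≤ d i) →
      ∀ x ∈ degSeqMS n j d, j ≤ x := by
    intro d hd x hx
    rw [degSeqMS, Multiset.mem_add] at hx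
    rcases hx with hx | hx
    · rw [Multiset.mem_sum] at hx
      obtain ⟨i, _, hi⟩ := hx
      rw [Multiset.eq_of_mem_replicate hi]
      have := hd i; omega
    · rw [Multiset.eq_of_mem_replicate hx]; omega
  -- the invariant sum ∑ φ(x) over the multiset
  set φ : ℕ → ℚ := fun x => ((x - j + 1 : ℕ) : ℚ)⁻¹ with hφ
  have hΦ : ∀ (d : Fin (k * j + 1) → ℕ), (∀ i, 1 ≤ d i) → (∑ i, d i) = n - j →
      ((degSeqMS n j d).map φ).sum = (k * j + 1 : ℚ) + (j : ℚ) * ((n - j : ℕ) : ℚ)⁻¹ := by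
    intro d hd hsd
    have hmap : Multiset.map φ (∑ i : Fin (k * j + 1), Multiset.replicate (d i) (d i + j - 1)) =
        ∑ i : Fin (k * j + 1), Multiset.map φ (Multiset.replicate (d i) (d i + j - 1)) :=
      map_sum (Multiset.mapAddMonoidHom φ) _ Finset.univ
    rw [degSeqMS, Multiset.map_add, Multiset.sum_add, hmap]
    have hsum2 : (∑ i : Fin (k * j + 1),
        Multiset.map φ (Multiset.replicate (d i) (d i + j - 1))).sum =
        ∑ i : Fin (k * j + 1), (Multiset.map φ (Multiset.replicate (d i) (d i + j - 1))).sum :=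
      map_sum Multiset.sumAddMonoidHom _ Finset.univ
    rw [hsum2]
    simp only [Multiset.map_replicate, Multiset.sum_replicate]
    have h1 : ∀ i : Fin (k * j + 1), (d i) • φ (d i + j - 1) = 1 := by
      intro i
      have hdi := hd i
      have h2 : d i + j - 1 - j + 1 = d i := by omega
      rw [hφ]
      simp only [h2]
      rw [nsmul_eq_mul, mul_inv_cancel₀ (by exact_mod_cast (by omega : d i ≠ 0))]
    have h3 : n - 1 - j + 1 = n - j := by omega
    rw [Finset.sum_congr rfl (fun i _ => h1 i), Finset.sum_const, Finset.card_univ,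
        Fintype.card_fin]
    rw [hφ]
    simp only [h3, smul_eq_mul, nsmul_eq_mul]
    push_cast
    ring
  -- the two multisets have equal φ-sums
  have hΦeq : ((degSeqMS n j c).map φ).sum = ((degSeqMS n j c').map φ).sum := by
    rw [hΦ c hc hsum, hΦ c' hc' hsum']
  -- sorted lists
  set L : List ℕ := Multiset.sort (degSeqMS n j c) (· ≤ ·) with hLdef
  set L' : List ℕ := Multiset.sort (degSeqMS n j c') (· ≤ ·) with hL'def
  have hlen : L.length = n := by
    rw [hLdef, Multiset.length_sort, hcard c hsum]
  have hlen' : L'.length = n := by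
    rw [hL'def, Multiset.length_sort, hcard c' hsum']
  -- express the φ-sum of the multiset as a sum over indices of the sorted list
  have hsumL : ∀ (d : Fin (k * j + 1) → ℕ) (l : List ℕ),
      l = Multiset.sort (degSeqMS n j d) (· ≤ ·) → l.length = n →
      ((degSeqMS n j d).map φ).sum = ∑ i : Fin n, φ (l.getD i 0) := by
    intro d l hl hlength
    have h1 : (degSeqMS n j d) = (l : Multiset ℕ) := by rw [hl, Multiset.sort_eq]
    rw [h1]
    rw [Multiset.map_coe, Multiset.sum_coe]
    have h2 : l.map φ = List.ofFn (fun i : Fin n => φ (l.getD i 0)) := by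
      apply List.ext_getElem
      · simp [hlength]
      · intro i h1' h2'
        have hi : i < l.length := by simpa [hlength] using h2'
        simp only [List.getElem_map, List.getElem_ofFn]
        rw [List.getD_eq_getElem l 0 hi]
      -- lengths and entries
    rw [h2, List.sum_ofFn]
  -- termwise inequality on φ-values
  have hterm : ∀ i : Fin n, φ (L.getD i 0) ≤ φ (L'.getD i 0) := by
    intro i
    have hi : (i : ℕ) < L.length := by rw [hlen]; exact i.isLt
    have hi' : (i : ℕ) < L'.length := by rw [hlen']; exact i.isLt
    have hmemL' : L'.getD i 0 ∈ degSeqMS n j c' := by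
      rw [← Multiset.mem_sort (· ≤ ·), ← hL'def, List.getD_eq_getElem L' 0 hi']
      exact List.getElem_mem _
    have hmemL : L.getD i 0 ∈ degSeqMS n j c := by
      rw [← Multiset.mem_sort (· ≤ ·), ← hLdef, List.getD_eq_getElem L 0 hi]
      exact List.getElem_mem _
    have hj1 : j ≤ L'.getD i 0 := hmem c' hc' _ hmemL'
    have hle : L'.getD i 0 ≤ L.getD i 0 := hmaj i
    rw [hφ]
    have hpos : (0 : ℚ) < ((L'.getD i 0 - j + 1 : ℕ) : ℚ) := by
      exact_mod_cast (by omega : 0 < L'.getD i 0 - j + 1)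
    apply inv_anti₀ hpos
    exact_mod_cast (by omega : L'.getD i 0 - j + 1 ≤ L.getD i 0 - j + 1)
  -- sums are equal, so terms are equal
  have hsums : ∑ i : Fin n, φ (L.getD i 0) = ∑ i : Fin n, φ (L'.getD i 0) := by
    rw [← hsumL c L hLdef hlen, ← hsumL c' L' hL'def hlen', hΦeq]
  have heachφ : ∀ i : Fin n, φ (L.getD i 0) = φ (L'.getD i 0) :=
    fun i => (Finset.sum_eq_sum_iff_of_le (fun i _ => hterm i)).mp hsums i (Finset.mem_univ i)
  -- hence the entries themselves are equal
  have heach : ∀ i : Fin n, L.getD i 0 = L'.getD i 0 := by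
    intro i
    have hi : (i : ℕ) < L.length := by rw [hlen]; exact i.isLt
    have hi' : (i : ℕ) < L'.length := by rw [hlen']; exact i.isLt
    have hmemL' : L'.getD i 0 ∈ degSeqMS n j c' := by
      rw [← Multiset.mem_sort (· ≤ ·), ← hL'def, List.getD_eq_getElem L' 0 hi']
      exact List.getElem_mem _
    have hmemL : L.getD i 0 ∈ degSeqMS n j c := by
      rw [← Multiset.mem_sort (· ≤ ·), ← hLdef, List.getD_eq_getElem L 0 hi]
      exact List.getElem_mem _
    have hja : j ≤ L.getD i 0 := hmem c hc _ hmemL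
    have hjb : j ≤ L'.getD i 0 := hmem c' hc' _ hmemL'
    have h := heachφ i
    rw [hφ] at h
    simp only at h
    have h2 : ((L.getD i 0 - j + 1 : ℕ) : ℚ) = ((L'.getD i 0 - j + 1 : ℕ) : ℚ) := by
      have ha : ((L.getD i 0 - j + 1 : ℕ) : ℚ) ≠ 0 := by
        exact_mod_cast (by omega : L.getD i 0 - j + 1 ≠ 0)
      have hb : ((L'.getD i 0 - j + 1 : ℕ) : ℚ) ≠ 0 := by
        exact_mod_cast (by omega : L'.getD i 0 - j + 1 ≠ 0)
      exact inv_injective h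
    have h3 : L.getD i 0 - j + 1 = L'.getD i 0 - j + 1 := by exact_mod_cast h2
    omega
  -- the sorted lists are equal, hence the multisets are equal
  have hLL' : L = L' := by
    apply List.ext_getElem (by rw [hlen, hlen'])
    intro i h1 h2
    have := heach ⟨i, by omega⟩
    rwa [List.getD_eq_getElem L 0 h1, List.getD_eq_getElem L' 0 h2] at this
  have hMeq : degSeqMS n j c = degSeqMS n j c' := by
    rw [← Multiset.sort_eq (degSeqMS n j c) (· ≤ ·), ← Multiset.sort_eq (degSeqMS n j c') (· ≤ ·),
      ← hLdef, ← hL'def, hLL']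
  -- cancel the common replicate part
  have hR : (∑ i : Fin (k * j + 1), Multiset.replicate (c i) (c i + j - 1)) =
      ∑ i : Fin (k * j + 1), Multiset.replicate (c' i) (c' i + j - 1) := by
    have := hMeq
    rw [degSeqMS, degSeqMS] at this
    exact add_right_cancel this
  -- counts of values give equal fibers
  have hfib : ∀ w : ℕ, (∑ i, if c i = w then (1 : ℕ) else 0) =
      ∑ i, if c' i = w then (1 : ℕ) else 0 := by
    intro w
    rcases Nat.eq_zero_or_pos w with hw | hw
    · subst hw
      rw [Finset.sum_eq_zero, Finset.sum_eq_zero]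
      · intro i _; have := hc' i; simp; omega
      · intro i _; have := hc i; simp; omega
    · have hcount := congrArg (Multiset.count (w + j - 1)) hR
      rw [Multiset.count_sum', Multiset.count_sum'] at hcount
      simp only [Multiset.count_replicate] at hcount
      have key : ∀ (d : Fin (k * j + 1) → ℕ), (∀ i, 1 ≤ d i) →
          (∑ i, if d i + j - 1 = w + j - 1 then d i else 0) =
          w * ∑ i, if d i = w then (1 : ℕ) else 0 := by
        intro d hd
        rw [Finset.mul_sum]
        apply Finset.sum_congr rfl
        intro i _
        have := hd i
        by_cases h : d i = w
        · rw [if_pos (by omega), if_pos h]; omega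
        · rw [if_neg (by omega), if_neg h]; ring
      rw [key c hc, key c' hc'] at hcount
      exact Nat.eq_of_mul_eq_mul_left hw hcount
  -- the value multisets are equal
  have hmult : (Multiset.map c Finset.univ.val) = Multiset.map c' Finset.univ.val := by
    have h1 : ∀ (d : Fin (k * j + 1) → ℕ) (w : ℕ),
        Multiset.count w (Multiset.map d Finset.univ.val) =
        ∑ i, if d i = w then (1 : ℕ) else 0 := by
      intro d w
      rw [Multiset.count_map, ← Finset.filter_val, ← Finset.card_def, Finset.card_filter]
      simp [eq_comm]
    rw [Multiset.ext]
    intro w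
    rw [h1 c w, h1 c' w, hfib w]
  -- convert to lists and conclude by sortedness
  have hofFn : (↑(List.ofFn c) : Multiset ℕ) = ↑(List.ofFn c') := by
    rw [List.ofFn_eq_map, List.ofFn_eq_map, ← Multiset.map_coe, ← Multiset.map_coe]
    have : (↑(List.finRange (k * j + 1)) : Multiset (Fin (k * j + 1))) = Finset.univ.val := by
      rfl
    rw [this, hmult]
  have hperm : (List.ofFn c).Perm (List.ofFn c') := Multiset.coe_eq_coe.mp hofFn
  have hsorted : (List.ofFn c).SortedLE := List.sortedLE_ofFn_iff.mpr hmc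
  have hsorted' : (List.ofFn c').SortedLE := List.sortedLE_ofFn_iff.mpr hmc'
  have : List.ofFn c = List.ofFn c' := hperm.eq_of_sortedLE hsorted hsorted'
  exact List.ofFn_injective this
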